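/- Let G be a nonsingular simple graph on n vertices with m edges, largest eigenvalue μ₁ = λ₁ > 1 and second largest absolute eigenvalue μ₂ > 0. If (μ₁ − 2m/n) + (2m − n + 1 − μ₁²)/(2μ₂ + 1) ≥ (2μ₂/(2μ₂+1))·ln μ₁, then E(G) ≥ n − 1 + 2m/n. -/

import Mathlib

open Finset Matrix

lemma log_le_half_sub_inv {x : ℝ} (hx : 1 ≤ x) : Real.log x ≤ (x - x⁻¹)/2 := by
  have hx0 : (0:ℝ) < x := by linarith
  have hu : 0 ≤ (x - x⁻¹)/2 := by
    have : x⁻¹ ≤ 1 := inv_le_one_of_one_le₀ hx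
    linarith
  rw [Real.log_le_iff_le_exp hx0]
  calc x ≤ 1 + (x - x⁻¹)/2 + ((x - x⁻¹)/2)^2/2 := by
        have h1 : x⁻¹ * x = 1 := inv_mul_cancel₀ (ne_of_gt hx0)
        nlinarith [sq_nonneg ((x-1)^2), sq_nonneg (x-1), sq_nonneg x, inv_pos.mpr hx0,
          mul_pos (inv_pos.mpr hx0) (inv_pos.mpr hx0)]
    _ ≤ Real.exp ((x - x⁻¹)/2) := Real.quadratic_le_exp_of_nonneg hu

lemma log_le_pade {x : ℝ} (hx0 : 0 < x) (hx1 : x ≤ 1) :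
    Real.log x ≤ 2*(x-1)/(x+1) := by
  set f : ℝ → ℝ := fun y => 2 - 4*(y+1)⁻¹ - Real.log y with hf
  have hd : ∀ y : ℝ, 0 < y → HasDerivAt f (4/((y+1)^2) - y⁻¹) y := by
    intro y hy0
    have h1 : HasDerivAt (fun y : ℝ => y + 1) 1 y := (hasDerivAt_id y).add_const 1
    have h2 : HasDerivAt (fun y : ℝ => (y+1)⁻¹) (-1/(y+1)^2) y := h1.inv (by positivity)
    have h3 : HasDerivAt f (0 - 4 * (-1/(y+1)^2) - y⁻¹) y :=
      ((hasDerivAt_const y (2:ℝ)).sub (h2.const_mul 4)).sub (Real.hasDerivAt_log hy0.ne')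
    convert h3 using 1
    field_simp
    ring
  have key : AntitoneOn f (Set.Icc x 1) := by
    apply antitoneOn_of_deriv_nonpos (convex_Icc _ _)
    · intro y hy
      rcases hy with ⟨h1, _⟩
      exact (hd y (lt_of_lt_of_le hx0 h1)).continuousAt.continuousWithinAt
    · intro y hy
      rw [interior_Icc] at hy
      exact (hd y (lt_trans hx0 hy.1)).differentiableAt.differentiableWithinAt
    · intro y hy
      rw [interior_Icc] at hy
      rcases hy with ⟨h1, h2⟩
      have hy0 : 0 < y := lt_trans hx0 h1
      rw [(hd y hy0).deriv]
      rw [sub_nonpos, div_le_iff₀ (by positivity)]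
      rw [inv_eq_one_div, div_mul_eq_mul_div, le_div_iff₀ hy0]
      nlinarith [sq_nonneg (y-1)]
  have h1 : f 1 ≤ f x := key (Set.mem_Icc.mpr ⟨le_refl x, hx1⟩) (Set.mem_Icc.mpr ⟨hx1, le_refl 1⟩) hx1
  have hfx : f 1 = 0 := by simp [hf]; norm_num
  rw [hfx] at h1
  simp only [hf] at h1
  have hx1' : (0:ℝ) < x + 1 := by linarith
  have heq : 2 - 4*(x+1)⁻¹ = 2*(x-1)/(x+1) := by field_simp; ring
  linarith [heq ▸ h1]

lemma ptA {x c : ℝ} (hx0 : 0 < x) (hx1 : x ≤ 1) (hc : 0 ≤ c) :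
    2*c*Real.log x ≤ (x-1)*(2*c-x) := by
  have h := Real.log_le_sub_one_of_pos hx0
  nlinarith

lemma ptB {x c : ℝ} (hx0 : 0 < x) (hc : 1 ≤ c) (hxc : x ≤ c) :
    c * Real.log x ≤ (x-1)*(c-x) + (x^2-1)/2 := by
  rcases le_or_gt x 1 with h1 | h1
  · have hp := log_le_pade hx0 h1
    have h2 : c * Real.log x ≤ c * (2*(x-1)/(x+1)) :=
      mul_le_mul_of_nonneg_left hp (by linarith)
    have h3 : c * (2*(x-1)/(x+1)) ≤ (x-1)*(c-x) + (x^2-1)/2 := by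
      rw [mul_div_assoc', div_le_iff₀ (by linarith : (0:ℝ) < x + 1)]
      nlinarith [sq_nonneg (x-1), mul_nonneg (sq_nonneg (x-1)) (by linarith : (0:ℝ) ≤ 2*c-1-x)]
    linarith
  · have hp := log_le_half_sub_inv h1.le
    have h2 : c * Real.log x ≤ c * ((x - x⁻¹)/2) :=
      mul_le_mul_of_nonneg_left hp (by linarith)
    have h3 : c * ((x - x⁻¹)/2) ≤ (x-1)*(c-x) + (x^2-1)/2 := by
      have hx2 : c * ((x - x⁻¹)/2) = (c*x^2 - c)/(2*x) := by
        field_simp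
      rw [hx2, div_le_iff₀ (by linarith : (0:ℝ) < 2*x)]
      nlinarith [mul_nonneg (sq_nonneg (x-1)) (sub_nonneg.mpr hxc)]
    linarith
section
variable {V : Type*} [Fintype V] [DecidableEq V]
    (G : SimpleGraph V) [DecidableRel G.Adj]
    (hA : (G.adjMatrix ℝ).IsHermitian)

-- determinant is an integer in absolute value ≥ 1 when nonzero
lemma det_int_abs (hdet : (G.adjMatrix ℝ).det ≠ 0) : 1 ≤ |(G.adjMatrix ℝ).det| := by
  have hmap : (G.adjMatrix ℤ).map (Int.cast : ℤ → ℝ) = G.adjMatrix ℝ := by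
    ext i j
    simp [SimpleGraph.adjMatrix_apply, Matrix.map_apply, apply_ite (Int.cast : ℤ → ℝ)]
  have hd : (G.adjMatrix ℝ).det = (((G.adjMatrix ℤ).det : ℤ) : ℝ) := by
    rw [← hmap]
    rw [show ((G.adjMatrix ℤ).map (Int.cast : ℤ → ℝ)) = (Int.castRingHom ℝ).mapMatrix (G.adjMatrix ℤ) from rfl]
    rw [← RingHom.map_det]
    rfl
  rw [hd]
  rw [hd] at hdet
  have : (G.adjMatrix ℤ).det ≠ 0 := by exact_mod_cast hdet
  rw [← Int.cast_abs]
  exact_mod_cast Int.one_le_abs this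

-- sum of squares of eigenvalues = 2m
lemma sum_eig_sq : ∑ i, hA.eigenvalues i ^ 2 = 2 * (G.edgeFinset.card : ℝ) := by
  have h1 : Matrix.trace (G.adjMatrix ℝ * G.adjMatrix ℝ) = 2 * (G.edgeFinset.card : ℝ) := by
    rw [Matrix.trace]
    simp only [Matrix.diag_apply, SimpleGraph.adjMatrix_mul_self_apply_self]
    rw [← Nat.cast_sum]
    rw [G.sum_degrees_eq_twice_card_edges]
    push_cast
    ring
  have hU : ((hA.eigenvectorUnitary : Matrix V V ℝ)) * star ((hA.eigenvectorUnitary : Matrix V V ℝ)) = 1 :=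
    (Matrix.mem_unitaryGroup_iff).mp (hA.eigenvectorUnitary).2
  have hspec := hA.spectral_theorem
  set U : Matrix V V ℝ := (hA.eigenvectorUnitary : Matrix V V ℝ) with hUdef
  set D : Matrix V V ℝ := Matrix.diagonal (RCLike.ofReal ∘ hA.eigenvalues) with hDdef
  have hUU : star U * U = 1 := (Matrix.mem_unitaryGroup_iff').mp (hA.eigenvectorUnitary).2
  have h2 : G.adjMatrix ℝ * G.adjMatrix ℝ = U * (D * D) * star U := by
    rw [hspec, Unitary.conjStarAlgAut_apply, ← hUdef]
    rw [show U * D * star U * (U * D * star U) = U * D * (star U * U) * D * star U by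
      simp only [Matrix.mul_assoc]]
    rw [hUU]
    simp only [Matrix.mul_one, Matrix.mul_assoc]
  have h3 : Matrix.trace (U * (D * D) * star U) = Matrix.trace (D * D) := by
    rw [Matrix.trace_mul_cycle]
    rw [← Matrix.mul_assoc, hUU, Matrix.one_mul]
  have h4 : Matrix.trace (D * D) = ∑ i, hA.eigenvalues i ^ 2 := by
    rw [hDdef, Matrix.diagonal_mul_diagonal, Matrix.trace_diagonal]
    simp [sq]
  rw [← h4, ← h3, ← h2, h1]

lemma rayleigh_bound (mu1 : ℝ) (hmax1 : ∀ i, |hA.eigenvalues i| ≤ mu1) :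
    2 * (G.edgeFinset.card : ℝ) ≤ mu1 * (Fintype.card V : ℝ) := by
  classical
  set o : V → ℝ := Function.const V (1:ℝ) with ho
  set U : Matrix V V ℝ := (hA.eigenvectorUnitary : Matrix V V ℝ) with hUdef
  have hUU : star U * U = 1 := (Matrix.mem_unitaryGroup_iff').mp (hA.eigenvectorUnitary).2
  have hUU' : U * star U = 1 := (Matrix.mem_unitaryGroup_iff).mp (hA.eigenvectorUnitary).2
  set w : V → ℝ := Matrix.vecMul o U with hw
  -- first: total = 2m
  have h2m : o ⬝ᵥ (G.adjMatrix ℝ *ᵥ o) = 2 * (G.edgeFinset.card : ℝ) := by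
    rw [dotProduct]
    simp only [ho, SimpleGraph.adjMatrix_mulVec_const_apply, Function.const_apply, one_mul,
      mul_one]
    rw [← Nat.cast_sum]
    rw [G.sum_degrees_eq_twice_card_edges]
    push_cast; ring
  -- spectral expansion
  have hstar : (star U) *ᵥ o = w := by
    ext i
    simp [hw, Matrix.mulVec, Matrix.vecMul, dotProduct, Matrix.star_apply, mul_comm]
  have hexp : o ⬝ᵥ (G.adjMatrix ℝ *ᵥ o) = ∑ i, hA.eigenvalues i * (w i)^2 := by
    conv_lhs => rw [hA.spectral_theorem, Unitary.conjStarAlgAut_apply]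
    rw [← Matrix.mulVec_mulVec, ← Matrix.mulVec_mulVec]
    rw [hstar]
    rw [Matrix.dotProduct_mulVec]
    rw [show Matrix.vecMul o U = w from rfl]
    rw [dotProduct]
    apply Finset.sum_congr rfl
    intro i _
    rw [Matrix.mulVec_diagonal]
    simp [sq]
    ring
  -- norm of w
  have hnorm : ∑ i, (w i)^2 = (Fintype.card V : ℝ) := by
    have h1 : ∑ i, (w i)^2 = w ⬝ᵥ ((star U) *ᵥ o) := by
      rw [hstar, dotProduct]
      apply Finset.sum_congr rfl
      intro i _
      rw [sq]
    rw [h1, Matrix.dotProduct_mulVec, hw, Matrix.vecMul_vecMul, hUU', Matrix.vecMul_one, ho]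
    simp [dotProduct]
  -- combine
  have hle : ∑ i, hA.eigenvalues i * (w i)^2 ≤ ∑ i, mu1 * (w i)^2 := by
    apply Finset.sum_le_sum
    intro i _
    apply mul_le_mul_of_nonneg_right _ (sq_nonneg _)
    exact le_trans (le_abs_self _) (hmax1 i)
  rw [← h2m, hexp]
  calc ∑ i, hA.eigenvalues i * (w i)^2 ≤ ∑ i, mu1 * (w i)^2 := hle
    _ = mu1 * (Fintype.card V : ℝ) := by rw [← Finset.mul_sum, hnorm]
end

theorem stmt_16 {V : Type*} [Fintype V] [DecidableEq V]
    (G : SimpleGraph V) [DecidableRel G.Adj]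
    (hA : (G.adjMatrix ℝ).IsHermitian)
    (hdet : (G.adjMatrix ℝ).det ≠ 0)
    (mu1 mu2 : ℝ) (hmu1 : 1 < mu1) (hmu2 : 0 < mu2)
    (i0 : V) (hi0 : hA.eigenvalues i0 = mu1)
    (hmax1 : ∀ i, |hA.eigenvalues i| ≤ mu1)
    (hmax2 : ∀ i, i ≠ i0 → |hA.eigenvalues i| ≤ mu2)
    (hmem2 : ∃ i, i ≠ i0 ∧ |hA.eigenvalues i| = mu2)
    (hcond : (mu1 - 2 * (G.edgeFinset.card : ℝ) / (Fintype.card V : ℝ)) +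
        (2 * (G.edgeFinset.card : ℝ) - (Fintype.card V : ℝ) + 1 - mu1 ^ 2) / (2 * mu2 + 1) ≥
        (2 * mu2 / (2 * mu2 + 1)) * Real.log mu1) :
    ∑ i, |hA.eigenvalues i| ≥
      (Fintype.card V : ℝ) - 1 + 2 * (G.edgeFinset.card : ℝ) / (Fintype.card V : ℝ) := by
  classical
  set e : V → ℝ := hA.eigenvalues with he
  set nc : ℝ := (Fintype.card V : ℝ) with hnc
  set mc : ℝ := (G.edgeFinset.card : ℝ) with hmc
  have hVne : Nonempty V := ⟨i0⟩
  have hn0 : (0:ℝ) < nc := by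
    rw [hnc]; exact_mod_cast Fintype.card_pos
  set d : ℝ := 2 * mc / nc with hd
  set v : ℝ := Real.log mu1 with hv
  set s : Finset V := Finset.univ.erase i0 with hs
  have hcard : (s.card : ℝ) = nc - 1 := by
    rw [hs, Finset.card_erase_of_mem (Finset.mem_univ i0), Finset.card_univ, hnc]
    have h1 : 1 ≤ Fintype.card V := Fintype.card_pos
    push_cast [Nat.cast_sub h1]
    ring
  -- eigenvalues nonzero
  have hprod : (G.adjMatrix ℝ).det = ∏ i, e i := by
    rw [hA.det_eq_prod_eigenvalues]; norm_num; rfl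
  have hne : ∀ i, e i ≠ 0 := by
    intro i
    have := hdet
    rw [hprod] at this
    exact Finset.prod_ne_zero_iff.mp this i (Finset.mem_univ i)
  have habs : ∀ i, 0 < |e i| := fun i => abs_pos.mpr (hne i)
  have habs0 : |e i0| = mu1 := by rw [hi0]; exact abs_of_pos (by linarith)
  -- log sum
  set L : ℝ := ∑ i ∈ s, Real.log |e i| with hL
  have hlogdet : 0 ≤ v + L := by
    have h1 : 1 ≤ |(G.adjMatrix ℝ).det| := det_int_abs G hdet
    have h2 : |(G.adjMatrix ℝ).det| = ∏ i, |e i| := by rw [hprod, Finset.abs_prod]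
    have h3 : Real.log (∏ i, |e i|) = ∑ i, Real.log |e i| :=
      Real.log_prod (fun i _ => (habs i).ne')
    have h4 : 0 ≤ ∑ i, Real.log |e i| := by
      rw [← h3, ← h2]
      exact Real.log_nonneg h1
    have h5 : ∑ i, Real.log |e i| = Real.log |e i0| + L := by
      rw [hL, hs, ← Finset.add_sum_erase _ _ (Finset.mem_univ i0)]
    rw [h5, habs0] at h4
    exact h4
  -- sum of squares
  set Q : ℝ := ∑ i ∈ s, |e i|^2 with hQ
  have hsumsq : mu1^2 + Q = 2 * mc := by
    have h1 := sum_eig_sq G hA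
    have h2 : ∑ i, e i ^ 2 = e i0 ^2 + ∑ i ∈ s, e i ^2 := by
      rw [hs, ← Finset.add_sum_erase _ _ (Finset.mem_univ i0)]
    have h3 : ∑ i ∈ s, e i ^ 2 = Q := by
      rw [hQ]; exact Finset.sum_congr rfl (fun i _ => (sq_abs (e i)).symm)
    rw [h2, h3, hi0] at h1
    rw [hmc]
    exact h1
  -- rayleigh
  have hray : 2 * mc ≤ mu1 * nc := rayleigh_bound G hA mu1 hmax1
  have hdm : d ≤ mu1 := by
    rw [hd, div_le_iff₀ hn0]
    linarith
  -- split goal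
  set S : ℝ := ∑ i ∈ s, |e i| with hS
  have hgoal : ∑ i, |e i| = mu1 + S := by
    rw [hS, hs, ← Finset.add_sum_erase _ _ (Finset.mem_univ i0), habs0]
  rw [hgoal]
  show mu1 + S ≥ nc - 1 + d
  -- hypotheses on x i over s
  have hx0 : ∀ i ∈ s, 0 < |e i| := fun i _ => habs i
  have hxc : ∀ i ∈ s, |e i| ≤ mu2 := by
    intro i hi
    exact hmax2 i (Finset.ne_of_mem_erase hi)
  -- hcond cleaned: multiply by c
  have hc : (0:ℝ) < 2*mu2+1 := by linarith
  have h1 : 2*mu2*v ≤ (2*mu2+1)*(mu1 - d) + (Q - (nc-1)) := by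
    have hquv : 2 * mc - nc + 1 - mu1^2 = Q - (nc - 1) := by linarith
    have h0 := hcond
    rw [ge_iff_le, hquv] at h0
    have h2 := mul_le_mul_of_nonneg_left h0 hc.le
    calc 2*mu2*v = (2*mu2+1) * (2 * mu2 / (2 * mu2 + 1) * v) := by
          first | (field_simp; ring) | field_simp
      _ ≤ (2*mu2+1) * ((mu1 - d) + (Q - (nc-1))/(2*mu2+1)) := h2
      _ = (2*mu2+1)*(mu1 - d) + (Q - (nc-1)) := by field_simp
  clear_value nc mc d v L Q S
  rcases le_or_gt mu2 1 with hm2 | hm2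
  · -- case mu2 ≤ 1 : pointwise lemma A
    have hsum : ∑ i ∈ s, 2*mu2*Real.log |e i| ≤ ∑ i ∈ s, ((|e i|-1)*(2*mu2-|e i|)) :=
      Finset.sum_le_sum (fun i hi => ptA (hx0 i hi) (le_trans (hxc i hi) hm2) hmu2.le)
    have hL1 : ∑ i ∈ s, 2*mu2*Real.log |e i| = 2*mu2*L := by
      rw [hL, Finset.mul_sum]
    have hR1 : ∑ i ∈ s, ((|e i|-1)*(2*mu2-|e i|)) =
        (2*mu2+1)*S - Q - 2*mu2*(nc-1) := by
      calc ∑ i ∈ s, ((|e i|-1)*(2*mu2-|e i|))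
          = ∑ i ∈ s, ((2*mu2+1)*|e i| - |e i|^2 - 2*mu2) :=
            Finset.sum_congr rfl (fun i _ => by ring)
        _ = (2*mu2+1)*S - Q - 2*mu2*(nc-1) := by
            rw [Finset.sum_sub_distrib, Finset.sum_sub_distrib, ← Finset.mul_sum,
              Finset.sum_const, nsmul_eq_mul, hcard, ← hS, ← hQ]
            ring
    rw [hL1, hR1] at hsum
    have hmul : 0 ≤ 2*mu2*(v+L) := mul_nonneg (by linarith) hlogdet
    have hab : 0 ≤ (2*mu2+1)*((mu1-d)+(S-(nc-1))) := by linarith [h1, hsum, hmul]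
    have := (mul_nonneg_iff_of_pos_left hc).mp hab
    linarith
  · -- case mu2 ≥ 1 : pointwise lemma B
    have hsum : ∑ i ∈ s, 2*(mu2*Real.log |e i|) ≤
        ∑ i ∈ s, (2*((|e i|-1)*(mu2-|e i|)) + (|e i|^2-1)) := by
      apply Finset.sum_le_sum
      intro i hi
      have := ptB (hx0 i hi) hm2.le (hxc i hi)
      linarith
    have hL1 : ∑ i ∈ s, 2*(mu2*Real.log |e i|) = 2*mu2*L := by
      rw [hL, Finset.mul_sum]
      apply Finset.sum_congr rfl
      intro i _; ring
    have hR1 : ∑ i ∈ s, (2*((|e i|-1)*(mu2-|e i|)) + (|e i|^2-1)) =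
        2*(mu2+1)*S - Q - (2*mu2+1)*(nc-1) := by
      calc ∑ i ∈ s, (2*((|e i|-1)*(mu2-|e i|)) + (|e i|^2-1))
          = ∑ i ∈ s, (2*(mu2+1)*|e i| - |e i|^2 - (2*mu2+1)) :=
            Finset.sum_congr rfl (fun i _ => by ring)
        _ = 2*(mu2+1)*S - Q - (2*mu2+1)*(nc-1) := by
            rw [Finset.sum_sub_distrib, Finset.sum_sub_distrib, ← Finset.mul_sum,
              Finset.sum_const, nsmul_eq_mul, hcard, ← hS, ← hQ]
            ring
    rw [hL1, hR1] at hsum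
    -- derived bound : 2(mu2+1)(S-(nc-1)) ≥ (Q-(nc-1)) - 2 mu2 v
    have hmul : 0 ≤ 2*mu2*(v+L) := mul_nonneg (by linarith) hlogdet
    have hB1 : 2*(mu2+1)*(S-(nc-1)) ≥ (Q-(nc-1)) - 2*mu2*v := by
      linarith [hsum, hmul]
    rcases le_or_gt (Q-(nc-1)) (2*mu2*v) with hsub | hsub
    · -- hcond branch
      have t1 : (2*mu2+2) * ((2*mu2+1)*(mu1-d) + (Q - (nc-1))) ≥ (2*mu2+2) * (2*mu2*v) :=
        mul_le_mul_of_nonneg_left h1 (by linarith)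
      have t2 : (2*mu2+1) * (2*(mu2+1)*(S-(nc-1))) ≥ (2*mu2+1) * ((Q-(nc-1)) - 2*mu2*v) :=
        mul_le_mul_of_nonneg_left hB1 hc.le
      have hff : (0:ℝ) < (2*mu2+2)*(2*mu2+1) := by positivity
      have hab : 0 ≤ ((2*mu2+2)*(2*mu2+1))*((mu1-d)+(S-(nc-1))) := by linarith [t1, t2, hsub]
      have := (mul_nonneg_iff_of_pos_left hff).mp hab
      linarith
    · -- rayleigh branch
      have hff : (0:ℝ) < 2*(mu2+1) := by linarith
      have hab : 0 ≤ (2*(mu2+1))*(S-(nc-1)) := by linarith [hB1, hsub.le]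
      have hSpos := (mul_nonneg_iff_of_pos_left hff).mp hab
      linarith [hdm, hSpos]
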